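/- Let v solve v' = (1+v²)g(v/r) on [r₀,∞) with v(r₀) < 0, where g(y) = ((n-k)/(k+1))·y·((k+1)-(n-k-1)y)/((n-k)y-k) and 1 ≤ k < n-1. Then v is increasing, v(r) < 0 for all r ≥ r₀, and v(r) → 0 as r → ∞. -/

import Mathlib

open Filter

private lemma aux_eq (N K y : ℝ) (hK : 1 ≤ K) (hKN : K + 1 < N) (hy : y ≤ 0) :
    (N - K) / (K + 1) * y * ((K + 1) - (N - K - 1) * y) / ((N - K) * y - K)
      = ((N - K) * (-y)) * (((K + 1) - (N - K - 1) * y) / ((K + 1) * (K - (N - K) * y))) := by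
  have hD : (0:ℝ) < N - K := by linarith
  have hDy : (N - K) * y ≤ 0 := mul_nonpos_of_nonneg_of_nonpos hD.le hy
  have h1 : (K:ℝ) + 1 ≠ 0 := by linarith
  have h2 : K - (N - K) * y ≠ 0 := by nlinarith
  have h3 : (N - K) * y - K ≠ 0 := by nlinarith
  field_simp
  ring

set_option maxHeartbeats 2000000 in
theorem stmt17 (n k : ℕ) (hk : 1 ≤ k) (hkn : k + 1 < n)
    (g : ℝ → ℝ)
    (hg : ∀ y : ℝ, g y = ((n : ℝ) - k) / ((k : ℝ) + 1) * y
      * (((k : ℝ) + 1) - ((n : ℝ) - k - 1) * y) / (((n : ℝ) - k) * y - k))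
    (r₀ : ℝ) (hr₀ : 0 < r₀) (v : ℝ → ℝ) (hv₀ : v r₀ < 0)
    (hode : ∀ r : ℝ, r₀ ≤ r → HasDerivAt v ((1 + (v r) ^ 2) * g (v r / r)) r) :
    StrictMonoOn v (Set.Ici r₀) ∧
    (∀ r : ℝ, r₀ ≤ r → v r < 0) ∧
    Tendsto v atTop (nhds 0) := by
  have hK : (1:ℝ) ≤ (k:ℝ) := by exact_mod_cast hk
  have hKN : (k:ℝ) + 1 < (n:ℝ) := by exact_mod_cast hkn
  set N : ℝ := (n:ℝ) with hN
  set K : ℝ := (k:ℝ) with hKdef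
  have hD : (0:ℝ) < N - K := by linarith
  have hC : (0:ℝ) ≤ N - K - 1 := by linarith
  have hB : (0:ℝ) < K + 1 := by linarith
  -- rewritten form of g on nonpositive arguments
  have hgeq : ∀ y : ℝ, y ≤ 0 →
      g y = ((N - K) * (-y)) * (((K + 1) - (N - K - 1) * y) / ((K + 1) * (K - (N - K) * y))) := by
    intro y hy
    rw [hg y]
    exact aux_eq N K y hK hKN hy
  have hfracpos : ∀ y : ℝ, y ≤ 0 → 0 < (K + 1) * (K - (N - K) * y) := by
    intro y hy
    have : (N - K) * y ≤ 0 := mul_nonpos_of_nonneg_of_nonpos hD.le hy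
    nlinarith
  have hg_nonneg : ∀ y : ℝ, y ≤ 0 → 0 ≤ g y := by
    intro y hy
    rw [hgeq y hy]
    have h1 : 0 ≤ (N - K) * (-y) := mul_nonneg hD.le (by linarith)
    have h2 : 0 ≤ (K + 1) - (N - K - 1) * y := by nlinarith
    exact mul_nonneg h1 (div_nonneg h2 (hfracpos y hy).le)
  have hg_pos : ∀ y : ℝ, y < 0 → 0 < g y := by
    intro y hy
    rw [hgeq y hy.le]
    have h1 : 0 < (N - K) * (-y) := mul_pos hD (by linarith)
    have h2 : 0 < (K + 1) - (N - K - 1) * y := by nlinarith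
    exact mul_pos h1 (div_pos h2 (hfracpos y hy.le))
  -- upper bound: for -M' ≤ y ≤ 0, g y ≤ T(M') * (-y)
  have hg_ub : ∀ M' : ℝ, 0 ≤ M' → ∀ y : ℝ, -M' ≤ y → y ≤ 0 →
      g y ≤ (N - K) * (((K + 1) + (N - K - 1) * M') / ((K + 1) * K)) * (-y) := by
    intro M' hM' y hyl hy
    rw [hgeq y hy]
    have hden : (K + 1) * K ≤ (K + 1) * (K - (N - K) * y) := by
      have : (N - K) * y ≤ 0 := mul_nonpos_of_nonneg_of_nonpos hD.le hy
      nlinarith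
    have hfr : ((K + 1) - (N - K - 1) * y) / ((K + 1) * (K - (N - K) * y))
        ≤ ((K + 1) + (N - K - 1) * M') / ((K + 1) * K) := by
      apply div_le_div₀ (by nlinarith) (by nlinarith) (by nlinarith) hden
    calc ((N - K) * (-y)) * (((K + 1) - (N - K - 1) * y) / ((K + 1) * (K - (N - K) * y)))
        ≤ ((N - K) * (-y)) * (((K + 1) + (N - K - 1) * M') / ((K + 1) * K)) :=
          mul_le_mul_of_nonneg_left hfr (mul_nonneg hD.le (by linarith))
      _ = (N - K) * (((K + 1) + (N - K - 1) * M') / ((K + 1) * K)) * (-y) := by ring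
  -- lower bound: for -1 ≤ y ≤ 0, ((N-K)/N) * (-y) ≤ g y
  have hg_lb : ∀ y : ℝ, -1 ≤ y → y ≤ 0 → (N - K) / N * (-y) ≤ g y := by
    intro y hyl hy
    rw [hgeq y hy]
    have hNpos : (0:ℝ) < N := by linarith
    have hfr : (K + 1) / ((K + 1) * N) ≤
        ((K + 1) - (N - K - 1) * y) / ((K + 1) * (K - (N - K) * y)) := by
      have h4 : K - (N - K) * y ≤ N := by
        nlinarith [mul_nonneg hD.le (by linarith : (0:ℝ) ≤ y + 1)]
      apply div_le_div₀ (by nlinarith) (by nlinarith) (hfracpos y hy)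
        (mul_le_mul_of_nonneg_left h4 hB.le)
    have h1 : (K + 1) / ((K + 1) * N) = 1 / N := by
      field_simp
    calc (N - K) / N * (-y) = ((N - K) * (-y)) * ((K + 1) / ((K + 1) * N)) := by
          rw [h1]; ring
      _ ≤ ((N - K) * (-y)) * (((K + 1) - (N - K - 1) * y) / ((K + 1) * (K - (N - K) * y))) :=
          mul_le_mul_of_nonneg_left hfr (mul_nonneg hD.le (by linarith))
  -- continuity of v on [r₀, ∞)
  have hvcont : ContinuousOn v (Set.Ici r₀) := fun r hr =>
    (hode r hr).continuousAt.continuousWithinAt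
  -- Step 1: negativity
  have hneg : ∀ r : ℝ, r₀ ≤ r → v r < 0 := by
    by_contra hcon
    push_neg at hcon
    obtain ⟨r₂, hr₂, hvr₂⟩ := hcon
    set S : Set ℝ := Set.Ici r₀ ∩ v ⁻¹' Set.Ici 0 with hS
    have hScl : IsClosed S := hvcont.preimage_isClosed_of_isClosed isClosed_Ici isClosed_Ici
    have hSne : S.Nonempty := ⟨r₂, hr₂, hvr₂⟩
    have hSbd : BddBelow S := ⟨r₀, fun x hx => hx.1⟩
    obtain ⟨r₁, hr₁S, hr₁lb⟩ : ∃ r₁, r₁ ∈ S ∧ ∀ x ∈ S, r₁ ≤ x :=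
      ⟨sInf S, hScl.csInf_mem hSne hSbd, fun x hx => csInf_le hSbd hx⟩
    have hr₁ : r₀ ≤ r₁ := hr₁S.1
    have hv₁ : 0 ≤ v r₁ := hr₁S.2
    have hlt : ∀ r, r₀ ≤ r → r < r₁ → v r < 0 := by
      intro r h1 h2
      by_contra h
      push_neg at h
      exact absurd (hr₁lb r ⟨h1, h⟩) (not_le.2 h2)
    have hr₀r₁ : r₀ < r₁ :=
      lt_of_le_of_ne hr₁ (by rintro rfl; exact absurd hv₁ (not_le.2 hv₀))
    have hv₁le : v r₁ ≤ 0 := by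
      have htd : Tendsto v (nhdsWithin r₁ (Set.Iio r₁)) (nhds (v r₁)) :=
        ((hode r₁ hr₁).continuousAt.tendsto).mono_left nhdsWithin_le_nhds
      refine le_of_tendsto htd ?_
      filter_upwards [Ioo_mem_nhdsLT hr₀r₁] with x hx
      exact (hlt x hx.1.le hx.2).le
    have hv₁0 : v r₁ = 0 := le_antisymm hv₁le hv₁
    have hvle : ∀ s ∈ Set.Icc r₀ r₁, v s ≤ 0 := by
      intro s hs
      rcases eq_or_lt_of_le hs.2 with h | h
      · rw [h, hv₁0]
      · exact (hlt s hs.1 h).le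
    obtain ⟨M, hM⟩ := isCompact_Icc.exists_bound_of_continuousOn
      (hvcont.mono (Set.Icc_subset_Ici_self : Set.Icc r₀ r₁ ⊆ Set.Ici r₀))
    have hM0 : 0 ≤ M := le_trans (norm_nonneg _) (hM r₀ ⟨le_refl _, hr₀r₁.le⟩)
    set T : ℝ := (N - K) * (((K + 1) + (N - K - 1) * (M / r₀)) / ((K + 1) * K)) with hT
    have hT0 : 0 ≤ T := by
      have h1 : 0 ≤ (N - K - 1) * (M / r₀) := mul_nonneg hC (by positivity)
      exact mul_nonneg hD.le (div_nonneg (by linarith) (by nlinarith))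
    set c : ℝ := r₀ + r₁ with hc
    set u : ℝ → ℝ := fun t => v (c - t) with hu
    set K₀ : ℝ := (1 + M ^ 2) * T / r₀ with hK₀
    set f' : ℝ → ℝ := fun t => -((1 + (v (c - t)) ^ 2) * g (v (c - t) / (c - t))) with hf'
    have hmem : ∀ t ∈ Set.Icc r₀ r₁, c - t ∈ Set.Icc r₀ r₁ := by
      intro t ht
      exact ⟨by simp only [hc]; linarith [ht.2], by simp only [hc]; linarith [ht.1]⟩
    have hu' : ∀ t ∈ Set.Icc r₀ r₁, HasDerivAt u (f' t) t := by
      intro t ht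
      have h1 : HasDerivAt (fun t : ℝ => c - t) (-1) t := by
        exact (hasDerivAt_id' t).const_sub c
      have h2 := (hode (c - t) (hmem t ht).1).comp t h1
      simpa [hu, hf', mul_comm, mul_neg, Function.comp_def] using h2
    have hucont : ContinuousOn u (Set.Icc r₀ r₁) := fun t ht =>
      (hu' t ht).continuousAt.continuousWithinAt
    have hbound : ∀ t ∈ Set.Ico r₀ r₁, ‖f' t‖ ≤ K₀ * ‖u t‖ + 0 := by
      intro t ht
      have hts : c - t ∈ Set.Icc r₀ r₁ := hmem t ⟨ht.1, ht.2.le⟩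
      set s : ℝ := c - t with hsdef
      have hspos : 0 < s := lt_of_lt_of_le hr₀ hts.1
      have hvs : v s ≤ 0 := hvle s hts
      have hvsM : ‖v s‖ ≤ M := hM s hts
      have hvsM' : -M ≤ v s := by
        rw [Real.norm_eq_abs, abs_le] at hvsM; exact hvsM.1
      set y : ℝ := v s / s with hy
      have hy0 : y ≤ 0 := div_nonpos_of_nonpos_of_nonneg hvs hspos.le
      have hyl : -(M / r₀) ≤ y := by
        have h1 : (-v s) / s ≤ M / r₀ := div_le_div₀ hM0 (by linarith) hr₀ hts.1
        rw [neg_div] at h1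
        simp only [hy]
        linarith
      have hub := hg_ub (M / r₀) (by positivity) y hyl hy0
      have hsq : (v s) ^ 2 ≤ M ^ 2 := by nlinarith
      have hgy : 0 ≤ g y := hg_nonneg y hy0
      have h1v : (0:ℝ) < 1 + (v s) ^ 2 := by positivity
      have hnorm : ‖f' t‖ = (1 + (v s) ^ 2) * g y := by
        rw [hf', Real.norm_eq_abs]
        simp only [← hsdef, ← hy]
        rw [abs_neg, abs_of_nonneg (mul_nonneg h1v.le hgy)]
      have hueq : ‖u t‖ = -(v s) := by
        rw [hu, Real.norm_eq_abs]
        simp only [← hsdef]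
        exact abs_of_nonpos hvs
      rw [hnorm, add_zero, hueq]
      have hny : T * (-y) ≤ T * ((-(v s)) / r₀) := by
        apply mul_le_mul_of_nonneg_left ?_ hT0
        have : -y = (-(v s)) / s := by rw [hy]; ring
        rw [this]
        exact div_le_div₀ (by linarith) (le_refl _) hr₀ hts.1
      calc (1 + (v s) ^ 2) * g y
          ≤ (1 + M ^ 2) * (T * (-y)) := by
            apply mul_le_mul (by nlinarith) ?_ hgy (by nlinarith)
            simpa [hT] using hub
        _ ≤ (1 + M ^ 2) * (T * ((-(v s)) / r₀)) := by
            apply mul_le_mul_of_nonneg_left hny (by positivity)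
        _ = K₀ * (-(v s)) := by rw [hK₀]; ring
    have ha : ‖u r₀‖ ≤ 0 := by
      have : c - r₀ = r₁ := by rw [hc]; ring
      rw [hu]
      simp only [this, hv₁0, norm_zero, le_refl]
    have hgb := norm_le_gronwallBound_of_norm_deriv_right_le hucont
      (fun x hx => (hu' x (Set.Ico_subset_Icc_self hx)).hasDerivWithinAt) ha hbound
      r₁ ⟨hr₀r₁.le, le_refl _⟩
    rw [gronwallBound_ε0_δ0] at hgb
    have hur₁ : u r₁ = v r₀ := by
      rw [hu]; congr 1; rw [hc]; ring
    rw [hur₁, Real.norm_eq_abs] at hgb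
    have : v r₀ = 0 := abs_eq_zero.1 (le_antisymm hgb (abs_nonneg _))
    linarith
  -- Step 2: strict monotonicity
  have hmono : StrictMonoOn v (Set.Ici r₀) := by
    apply strictMonoOn_of_deriv_pos (convex_Ici r₀) hvcont
    intro x hx
    rw [interior_Ici] at hx
    have hx' : r₀ ≤ x := le_of_lt hx
    rw [(hode x hx').deriv]
    have hxpos : 0 < x := lt_trans hr₀ hx
    have : v x / x < 0 := div_neg_of_neg_of_pos (hneg x hx') hxpos
    exact mul_pos (by positivity) (hg_pos _ this)
  refine ⟨hmono, hneg, ?_⟩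
  -- Step 3: limit
  set w : ℝ → ℝ := fun r => v (max r r₀) with hw
  have hwmono : Monotone w := by
    intro a b hab
    exact hmono.monotoneOn (le_max_right a r₀) (le_max_right b r₀)
      (max_le_max hab (le_refl r₀))
  have hwbdd : BddAbove (Set.range w) := by
    refine ⟨0, ?_⟩
    rintro x ⟨a, rfl⟩
    exact (hneg _ (le_max_right a r₀)).le
  set L : ℝ := ⨆ r, w r with hL
  have htendw : Tendsto w atTop (nhds L) := tendsto_atTop_ciSup hwmono hwbdd
  have hwv : w =ᶠ[atTop] v := by
    filter_upwards [eventually_ge_atTop r₀] with r hr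
    simp only [hw, max_eq_left hr]
  have htendv : Tendsto v atTop (nhds L) := htendw.congr' hwv
  have hL0 : L ≤ 0 := ciSup_le fun r => (hneg _ (le_max_right r r₀)).le
  have hvL : ∀ r : ℝ, r₀ ≤ r → v r < L := by
    intro r hr
    have h1 : v r < v (r + 1) := hmono hr (by simp only [Set.mem_Ici]; linarith) (by linarith)
    have h2 : v (r + 1) = w (r + 1) := by
      simp only [hw, max_eq_left (by linarith : r₀ ≤ r + 1)]
    have h3 : w (r + 1) ≤ L := le_ciSup hwbdd (r + 1)
    linarith
  -- show L = 0
  rcases eq_or_lt_of_le hL0 with hLeq | hLlt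
  · rwa [hLeq] at htendv
  · exfalso
    set δ : ℝ := -L with hδ
    have hδpos : 0 < δ := by simp only [hδ]; linarith
    have hNpos : (0:ℝ) < N := by linarith
    set cc : ℝ := (N - K) / N with hcc
    have hccpos : 0 < cc := div_pos hD hNpos
    set R : ℝ := max r₀ (max 1 (-v r₀)) with hR
    have hRr₀ : r₀ ≤ R := le_max_left _ _
    have hR1 : (1:ℝ) ≤ R := le_trans (le_max_left _ _) (le_max_right _ _)
    have hRv : -v r₀ ≤ R := le_trans (le_max_right _ _) (le_max_right _ _)
    have hRpos : 0 < R := lt_of_lt_of_le one_pos hR1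
    -- derivative lower bound for r ≥ R
    have hkey : ∀ r : ℝ, R ≤ r → cc * δ / r ≤ (1 + (v r) ^ 2) * g (v r / r) := by
      intro r hr
      have hrr₀ : r₀ ≤ r := le_trans hRr₀ hr
      have hrpos : 0 < r := lt_of_lt_of_le hRpos hr
      have hvneg : v r < 0 := hneg r hrr₀
      have hvmono : v r₀ ≤ v r := hmono.monotoneOn (Set.self_mem_Ici) hrr₀ hrr₀
      have hyl : -1 ≤ v r / r := by
        rw [le_div_iff₀ hrpos, neg_one_mul]
        have : -v r ≤ R := le_trans (by linarith) hRv
        linarith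
      have hy0 : v r / r ≤ 0 := (div_neg_of_neg_of_pos hvneg hrpos).le
      have hlb := hg_lb (v r / r) hyl hy0
      have hδr : -v r ≥ δ := by
        have := hvL r hrr₀
        simp only [hδ]; linarith
      have h1 : cc * δ / r ≤ cc * (-(v r / r)) := by
        have : -(v r / r) = (-v r) / r := by ring
        rw [this, mul_div_assoc]
        apply mul_le_mul_of_nonneg_left ?_ hccpos.le
        exact (div_le_div_iff_of_pos_right hrpos).2 hδr
      have h2 : cc * (-(v r / r)) ≤ g (v r / r) := by
        simpa [hcc] using hlb
      have h3 : g (v r / r) ≤ (1 + (v r) ^ 2) * g (v r / r) := by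
        have hgy := hg_nonneg (v r / r) hy0
        nlinarith
      linarith
    -- w2 is monotone on [R, ∞)
    set w2 : ℝ → ℝ := fun r => v r - cc * δ * Real.log r with hw2
    have hw2' : ∀ x : ℝ, R ≤ x →
        HasDerivAt w2 ((1 + (v x) ^ 2) * g (v x / x) - cc * δ * x⁻¹) x := by
      intro x hx
      have hxpos : 0 < x := lt_of_lt_of_le hRpos hx
      exact (hode x (le_trans hRr₀ hx)).sub
        ((Real.hasDerivAt_log (ne_of_gt hxpos)).const_mul (cc * δ))
    have hw2mono : MonotoneOn w2 (Set.Ici R) := by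
      apply monotoneOn_of_deriv_nonneg (convex_Ici R)
        (fun x hx => (hw2' x hx).continuousAt.continuousWithinAt)
      · intro x hx
        rw [interior_Ici] at hx
        exact (hw2' x hx.le).differentiableAt.differentiableWithinAt
      · intro x hx
        rw [interior_Ici] at hx
        rw [(hw2' x hx.le).deriv]
        have hxpos : 0 < x := lt_of_lt_of_le hRpos hx.le
        have := hkey x hx.le
        have hinv : cc * δ * x⁻¹ = cc * δ / x := by ring
        linarith [hinv ▸ this]
    -- reach a contradiction at large b
    set E : ℝ := (cc * δ * Real.log R - v R + 1) / (cc * δ) with hE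
    set b : ℝ := max R (Real.exp E) with hb
    have hbR : R ≤ b := le_max_left _ _
    have hlogb : E ≤ Real.log b := by
      have h1 : Real.exp E ≤ b := le_max_right _ _
      calc E = Real.log (Real.exp E) := (Real.log_exp E).symm
        _ ≤ Real.log b := Real.log_le_log (Real.exp_pos E) h1
    have hcd : 0 < cc * δ := mul_pos hccpos hδpos
    have hEq : cc * δ * E = cc * δ * Real.log R - v R + 1 := by
      rw [hE, mul_div_cancel₀ _ (ne_of_gt hcd)]
    have hmono2 : w2 R ≤ w2 b := hw2mono Set.self_mem_Ici hbR hbR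
    have hvb : v b < 0 := hneg b (le_trans hRr₀ hbR)
    have : v b ≥ 1 := by
      have h1 : v R - cc * δ * Real.log R ≤ v b - cc * δ * Real.log b := hmono2
      have h2 : cc * δ * E ≤ cc * δ * Real.log b :=
        mul_le_mul_of_nonneg_left hlogb hcd.le
      linarith [hEq ▸ h2]
    linarith
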